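/- Let g be a symmetric bilinear form on a real vector space V with basis (e₀, e₁, e₂, ..., e_{n-1}) such that g(e₀,e₀) = 0, g(e₁,e₁) = 0, g(e₀,e₁) = -1, g(e₀,eⱼ) = g(e₁,eⱼ) = 0 for j ≥ 2, and g(eᵢ,eⱼ) = -δᵢⱼ for i,j ≥ 2. If v = v⁰e₀ + v¹e₁ + Σⱼ vʲeⱼ is timelike (g(v,v) > 0) and w = w⁰e₀ + w¹e₁ + Σⱼ wʲeⱼ is timelike, then v and w lie in the same connected component of the set of timelike vectors if and only if v¹ and w¹ have the same sign. (Equivalently: the sign of the e₁-component is constant on each connected component of the timelike cone, and both signs occur.) -/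

import Mathlib

set_option maxHeartbeats 1000000 in
/-- In a Lorentzian vector space with a null basis
`(e₀, e₁, e₂, …, e_{n-1})`, a timelike vector has a nonzero `e₁`-component, and
two timelike vectors lie in the same connected component of the timelike cone
iff their `e₁`-components have the same sign. -/
theorem timelike_sameComponent_iff_sameSign_e1
    {n : ℕ} (hn : 2 ≤ n) {V : Type*} [NormedAddCommGroup V] [NormedSpace ℝ V]
    [FiniteDimensional ℝ V]
    (g : V →ₗ[ℝ] V →ₗ[ℝ] ℝ) (hsymm : ∀ x y : V, g x y = g y x)
    (b : Module.Basis (Fin n) ℝ V)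
    (h00 : g (b ⟨0, by omega⟩) (b ⟨0, by omega⟩) = 0)
    (h11 : g (b ⟨1, by omega⟩) (b ⟨1, by omega⟩) = 0)
    (h01 : g (b ⟨0, by omega⟩) (b ⟨1, by omega⟩) = -1)
    (h0j : ∀ j : Fin n, 2 ≤ (j : ℕ) → g (b ⟨0, by omega⟩) (b j) = 0)
    (h1j : ∀ j : Fin n, 2 ≤ (j : ℕ) → g (b ⟨1, by omega⟩) (b j) = 0)
    (hij : ∀ i j : Fin n, 2 ≤ (i : ℕ) → 2 ≤ (j : ℕ) →
      g (b i) (b j) = if i = j then -1 else 0)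
    (v w : V) (hv : 0 < g v v) (hw : 0 < g w w) :
    (b.repr v ⟨1, by omega⟩ ≠ 0) ∧
      (w ∈ connectedComponentIn {u : V | 0 < g u u} v ↔
        0 < (b.repr v ⟨1, by omega⟩) * (b.repr w ⟨1, by omega⟩)) := by
  classical
  set e0 : Fin n := ⟨0, by omega⟩ with he0
  set e1 : Fin n := ⟨1, by omega⟩ with he1
  have he01 : e0 ≠ e1 := by simp [he0, he1, Fin.ext_iff]
  set r : V → Fin n → ℝ := fun u i => b.repr u i with hr
  set T : Finset (Fin n) := (Finset.univ.erase e0).erase e1 with hT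
  have hTmem : ∀ i ∈ T, 2 ≤ (i : ℕ) := by
    intro i hi
    rw [hT, Finset.mem_erase, Finset.mem_erase] at hi
    have h1 : (i : ℕ) ≠ 1 := by
      intro h; exact hi.1 (by simp [he1, Fin.ext_iff, h])
    have h0 : (i : ℕ) ≠ 0 := by
      intro h; exact hi.2.1 (by simp [he0, Fin.ext_iff, h])
    omega
  -- row evaluation
  have hrow : ∀ (u' : V) (i : Fin n), (∑ j, r u' j * g (b i) (b j)) =
      if i = e0 then -(r u' e1) else if i = e1 then -(r u' e0) else -(r u' i) := by
    intro u' i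
    by_cases hi0 : i = e0
    · subst hi0
      rw [if_pos rfl, Finset.sum_eq_single e1]
      · rw [h01]; ring
      · intro j _ hj
        rcases Nat.lt_or_ge (j : ℕ) 2 with hj2 | hj2
        · interval_cases h : (j : ℕ)
          · have : j = e0 := by simp [he0, Fin.ext_iff, h]
            rw [this, h00]; ring
          · exact absurd (by simp [he1, Fin.ext_iff, h]) hj
        · rw [h0j j hj2]; ring
      · simp
    · by_cases hi1 : i = e1
      · subst hi1
        rw [if_neg (fun h => hi0 h), if_pos rfl, Finset.sum_eq_single e0]
        · rw [hsymm, h01]; ring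
        · intro j _ hj
          rcases Nat.lt_or_ge (j : ℕ) 2 with hj2 | hj2
          · interval_cases h : (j : ℕ)
            · exact absurd (by simp [he0, Fin.ext_iff, h]) hj
            · have : j = e1 := by simp [he1, Fin.ext_iff, h]
              rw [this, h11]; ring
          · rw [h1j j hj2]; ring
        · simp
      · have hi2 : 2 ≤ (i : ℕ) := by
          have h0 : (i : ℕ) ≠ 0 := fun h => hi0 (by simp [he0, Fin.ext_iff, h])
          have h1 : (i : ℕ) ≠ 1 := fun h => hi1 (by simp [he1, Fin.ext_iff, h])
          omega
        rw [if_neg hi0, if_neg hi1, Finset.sum_eq_single i]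
        · rw [hij i i hi2 hi2, if_pos rfl]; ring
        · intro j _ hj
          rcases Nat.lt_or_ge (j : ℕ) 2 with hj2 | hj2
          · interval_cases h : (j : ℕ)
            · have : j = e0 := by simp [he0, Fin.ext_iff, h]
              rw [this, hsymm, h0j i hi2]; ring
            · have : j = e1 := by simp [he1, Fin.ext_iff, h]
              rw [this, hsymm, h1j i hi2]; ring
          · rw [hij i j hi2 hj2, if_neg (fun h => hj h.symm)]; ring
        · simp
  -- the key coordinate formula
  have key : ∀ u u' : V, g u u' =
      -(r u e0 * r u' e1) - r u e1 * r u' e0 - ∑ i ∈ T, r u i * r u' i := by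
    intro u u'
    have expand : g u u' = ∑ i, r u i * ∑ j, r u' j * g (b i) (b j) := by
      conv_lhs => rw [← b.sum_repr u, ← b.sum_repr u']
      simp only [map_sum, LinearMap.sum_apply, map_smul, LinearMap.smul_apply, smul_eq_mul,
        Finset.mul_sum]
      rw [Finset.sum_comm]
      exact Finset.sum_congr rfl fun i _ => Finset.sum_congr rfl fun j _ => by ring
    rw [expand]
    simp only [hrow]
    rw [← Finset.add_sum_erase _ _ (Finset.mem_univ e0),
      ← Finset.add_sum_erase _ _ (Finset.mem_erase.mpr ⟨fun h => he01 h.symm, Finset.mem_univ e1⟩)]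
    rw [if_pos rfl, if_neg (fun h => he01 h.symm), if_pos rfl]
    have : ∑ i ∈ (Finset.univ.erase e0).erase e1, r u i *
        (if i = e0 then -(r u' e1) else if i = e1 then -(r u' e0) else -(r u' i)) =
        ∑ i ∈ T, -(r u i * r u' i) := by
      refine Finset.sum_congr (by rw [hT]) fun i hi => ?_
      rw [Finset.mem_erase, Finset.mem_erase] at hi
      rw [if_neg hi.2.1, if_neg hi.1]; ring
    rw [this, Finset.sum_neg_distrib]
    ring
  have sq_nn : ∀ u : V, (0:ℝ) ≤ ∑ i ∈ T, r u i * r u i :=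
    fun u => Finset.sum_nonneg fun i _ => mul_self_nonneg _
  -- timelike ⟹ opposite-sign light-cone coordinates
  have hprod : ∀ u : V, 0 < g u u → r u e0 * r u e1 < 0 := by
    intro u hu
    rw [key u u] at hu
    nlinarith [sq_nn u]
  -- cross positivity for same-(positive)-sign timelike vectors
  have cross : ∀ u u' : V, 0 < g u u → 0 < g u' u' → 0 < r u e1 → 0 < r u' e1 →
      0 < g u u' := by
    intro u u' hu hu' h1 h1'
    have hu0 : r u e0 < 0 := by
      have := hprod u hu; nlinarith
    have hu0' : r u' e0 < 0 := by
      have := hprod u' hu'; nlinarith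
    have hcs := Finset.sum_mul_sq_le_sq_mul_sq T (fun i => r u i) (fun i => r u' i)
    have hA : ∑ i ∈ T, r u i ^ 2 = ∑ i ∈ T, r u i * r u i := by
      exact Finset.sum_congr rfl fun i _ => sq (r u i)
    rw [key u u] at hu
    rw [key u' u'] at hu'
    rw [key u u']
    set A := ∑ i ∈ T, r u i * r u i with hAdef
    set B := ∑ i ∈ T, r u' i * r u' i with hBdef
    set P := ∑ i ∈ T, r u i * r u' i with hPdef
    have hA' : (∑ i ∈ T, r u i ^ 2) = A := Finset.sum_congr rfl fun i _ => sq (r u i)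
    have hB' : (∑ i ∈ T, r u' i ^ 2) = B := Finset.sum_congr rfl fun i _ => sq (r u' i)
    rw [hA', hB'] at hcs
    have hAnn : (0:ℝ) ≤ A := sq_nn u
    have hBnn : (0:ℝ) ≤ B := sq_nn u'
    have hq : (0:ℝ) < (-(2 * r u e0 * r u e1) - A) * (-(2 * r u' e0 * r u' e1) - B) :=
      mul_pos (by linarith) (by linarith)
    have hX : (0:ℝ) < -(r u e0 * r u' e1) - r u e1 * r u' e0 := by
      nlinarith [mul_pos (neg_pos.mpr hu0) h1', mul_pos h1 (neg_pos.mpr hu0')]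
    nlinarith [hq, hX, hcs, sq_nonneg (r u e0 * r u' e1 - r u e1 * r u' e0), hAnn, hBnn,
      mul_nonneg (show (0:ℝ) ≤ -(2 * r u e0 * r u e1) - A by linarith) hBnn,
      mul_nonneg (show (0:ℝ) ≤ -(2 * r u' e0 * r u' e1) - B by linarith) hAnn]
  -- the positive half-cone is convex
  set Sp : Set V := {u : V | 0 < g u u ∧ 0 < r u e1} with hSp
  have hSpconv : Convex ℝ Sp := by
    intro u hu u' hu' t s ht hs hts
    have h1 : 0 < r (t • u + s • u') e1 := by
      have : r (t • u + s • u') e1 = t * r u e1 + s * r u' e1 := by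
        simp [hr, map_add, map_smul]
      rw [this]
      rcases ht.eq_or_lt with h | h
      · have : s = 1 := by linarith
        rw [← h, this]; simpa using hu'.2
      · nlinarith [hu.2, hu'.2, mul_nonneg hs hu'.2.le, mul_pos h hu.2]
    have h2 : 0 < g (t • u + s • u') (t • u + s • u') := by
      have hexp : g (t • u + s • u') (t • u + s • u') =
          t * t * g u u + t * s * g u u' + s * t * g u' u + s * s * g u' u' := by
        simp only [map_add, map_smul, LinearMap.add_apply, LinearMap.smul_apply, smul_eq_mul]
        ring
      rw [hexp, hsymm u' u]
      have hc := cross u u' hu.1 hu'.1 hu.2 hu'.2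
      rcases ht.eq_or_lt with h | h
      · have hs1 : s = 1 := by linarith
        rw [← h, hs1]; simpa using hu'.1
      · rcases hs.eq_or_lt with h' | h'
        · have ht1 : t = 1 := by linarith
          rw [← h', ht1]; simpa using hu.1
        · nlinarith [mul_pos h h, mul_pos h' h', mul_pos h h', hu.1, hu'.1]
    exact ⟨h2, h1⟩
  -- the negative half-cone is the negation of the positive one
  set Sm : Set V := {u : V | 0 < g u u ∧ r u e1 < 0} with hSm
  have hgneg : ∀ u : V, g (-u) (-u) = g u u := by
    intro u
    simp
  have hrneg : ∀ u : V, r (-u) e1 = -(r u e1) := by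
    intro u
    show b.repr (-u) e1 = -(b.repr u e1)
    rw [map_neg, Finsupp.neg_apply]
  have hSmconv : Convex ℝ Sm := by
    have hset : Sm = -Sp := by
      ext u
      constructor
      · rintro ⟨hg1, hg2⟩
        show -u ∈ Sp
        exact ⟨by rw [hgneg]; exact hg1, by rw [hrneg]; linarith⟩
      · intro hu
        have hu' : -u ∈ Sp := hu
        obtain ⟨hg1, hg2⟩ := hu'
        rw [hgneg] at hg1
        rw [hrneg] at hg2
        exact ⟨hg1, by linarith⟩
    rw [hset]
    exact hSpconv.neg
  -- the coordinate functional is continuous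
  have hcont : Continuous fun u : V => r u e1 := by
    have : (fun u : V => r u e1) = fun u => b.coord e1 u := by
      funext u; simp [hr, Module.Basis.coord_apply]
    rw [this]
    exact (b.coord e1).continuous_of_finiteDimensional
  have hopen_pos : IsOpen {u : V | 0 < r u e1} := isOpen_lt continuous_const hcont
  have hopen_neg : IsOpen {u : V | r u e1 < 0} := isOpen_lt hcont continuous_const
  have hne1 : ∀ u : V, 0 < g u u → r u e1 ≠ 0 := by
    intro u hu h
    have := hprod u hu
    rw [h] at this; simp at this
  have hvne : r v e1 ≠ 0 := hne1 v hv
  refine ⟨hvne, ?_⟩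
  set C := connectedComponentIn {u : V | 0 < g u u} v with hC
  have hCsub : C ⊆ {u : V | 0 < g u u} := connectedComponentIn_subset _ _
  have hCconn : IsPreconnected C := isPreconnected_connectedComponentIn
  have hvC : v ∈ C := mem_connectedComponentIn hv
  have hCunion : C ⊆ {u : V | 0 < r u e1} ∪ {u : V | r u e1 < 0} := by
    intro u hu
    rcases (hne1 u (hCsub hu)).lt_or_gt with h | h
    · exact Or.inr h
    · exact Or.inl h
  have hdisj : Disjoint {u : V | 0 < r u e1} {u : V | r u e1 < 0} := by
    rw [Set.disjoint_left]
    intro u h1 h2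
    simp only [Set.mem_setOf_eq] at h1 h2
    linarith
  constructor
  · intro hwC
    rcases hvne.lt_or_gt with hvneg | hvpos
    · have : C ⊆ {u : V | r u e1 < 0} :=
        hCconn.subset_right_of_subset_union hopen_pos hopen_neg hdisj hCunion ⟨v, hvC, hvneg⟩
      exact mul_pos_of_neg_of_neg hvneg (this hwC)
    · have : C ⊆ {u : V | 0 < r u e1} :=
        hCconn.subset_left_of_subset_union hopen_pos hopen_neg hdisj hCunion ⟨v, hvC, hvpos⟩
      exact mul_pos hvpos (this hwC)
  · intro hvw
    rcases mul_pos_iff.mp hvw with ⟨hv1, hw1⟩ | ⟨hv1, hw1⟩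
    · have hvin : v ∈ Sp := ⟨hv, hv1⟩
      have hwin : w ∈ Sp := ⟨hw, hw1⟩
      have hsub : Sp ⊆ {u : V | 0 < g u u} := fun u hu => hu.1
      exact hSpconv.isPreconnected.subset_connectedComponentIn hvin hsub hwin
    · have hvin : v ∈ Sm := ⟨hv, hv1⟩
      have hwin : w ∈ Sm := ⟨hw, hw1⟩
      have hsub : Sm ⊆ {u : V | 0 < g u u} := fun u hu => hu.1
      exact hSmconv.isPreconnected.subset_connectedComponentIn hvin hsub hwin
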